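/- Let X be a real random variable with E|X|^n < ∞ for some n ≥ 1, characteristic function f(t) = E e^{itX}, and moments α_k = E X^k, β_n = E|X|^n. Then for all t ∈ ℝ and λ ≥ 0, |f(t) - ∑_{k=0}^{n-1} α_k (it)^k/k! - λ α_n (it)^n/n!| ≤ q_n(λ) · β_n |t|^n / n!, where q_n(λ) = sup_{x>0} (n!/x^n)·|e^{ix} - ∑_{k=0}^{n-1}(ix)^k/k! - λ(ix)^n/n!|. -/

import Mathlib

open MeasureTheory Complex

noncomputable def gg (n : ℕ) (x : ℝ) : ℂ :=
  Complex.exp (Complex.I * x) - ∑ k ∈ Finset.range n, (Complex.I * x) ^ k / (k.factorial : ℂ)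

lemma gg_cont (n : ℕ) : Continuous (gg n) := by
  unfold gg; fun_prop

lemma hasDerivAt_gg (n : ℕ) (x : ℝ) :
    HasDerivAt (gg (n+1)) (Complex.I * gg n x) x := by
  have hlin : HasDerivAt (fun z : ℂ => Complex.I * z) Complex.I (x : ℂ) := by
    simpa using (hasDerivAt_id (x : ℂ)).const_mul Complex.I
  have hexp : HasDerivAt (fun z : ℂ => Complex.exp (Complex.I * z))
      (Complex.exp (Complex.I * x) * Complex.I) (x : ℂ) := hlin.cexp
  have hsum : HasDerivAt (fun z : ℂ => ∑ k ∈ Finset.range (n+1), (Complex.I * z) ^ k / (k.factorial : ℂ))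
      (∑ k ∈ Finset.range (n+1), (k : ℂ) * (Complex.I * x) ^ (k - 1) * Complex.I / (k.factorial : ℂ)) (x : ℂ) := by
    apply HasDerivAt.fun_sum
    intro k _
    exact (hlin.pow k).div_const _
  have key : ∑ k ∈ Finset.range (n+1), (k : ℂ) * (Complex.I * x) ^ (k - 1) * Complex.I / (k.factorial : ℂ)
      = Complex.I * ∑ k ∈ Finset.range n, (Complex.I * x) ^ k / (k.factorial : ℂ) := by
    rw [Finset.sum_range_succ']
    simp only [Nat.cast_zero, Nat.factorial_zero, Nat.cast_one, zero_mul, zero_div, add_zero]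
    rw [Finset.mul_sum]
    congr 1
    ext k
    rw [Nat.factorial_succ, Nat.add_sub_cancel]
    have h1 : ((k : ℂ) + 1) ≠ 0 := by
      have : (((k+1 : ℕ)) : ℂ) ≠ 0 := Nat.cast_ne_zero.mpr k.succ_ne_zero
      push_cast at this; exact this
    have h2 : (k.factorial : ℂ) ≠ 0 := Nat.cast_ne_zero.mpr k.factorial_ne_zero
    push_cast
    field_simp
  have hC := (hexp.sub hsum).comp_ofReal
  rw [key] at hC
  unfold gg
  convert hC using 1
  · rfl
  · ring

lemma gg_zero (n : ℕ) (hn : 1 ≤ n) : gg n 0 = 0 := by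
  unfold gg
  rw [Finset.sum_eq_single 0]
  · simp
  · intro k _ hk
    simp [zero_pow hk]
  · intro h; exact absurd (Finset.mem_range.mpr (by omega)) h

lemma gg_bound_nonneg (n : ℕ) (x : ℝ) (hx : 0 ≤ x) :
    ‖gg n x‖ ≤ x ^ n / n.factorial := by
  induction n generalizing x with
  | zero =>
      simp only [gg, Finset.range_zero, Finset.sum_empty, sub_zero, pow_zero,
        Nat.factorial_zero, Nat.cast_one]
      rw [Complex.norm_exp]
      simp
  | succ n ih =>
    have hftc : ∫ s in (0:ℝ)..x, Complex.I * gg n s =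
        gg (n+1) x - gg (n+1) 0 := by
      apply intervalIntegral.integral_eq_sub_of_hasDerivAt
      · intro s _
        exact hasDerivAt_gg n s
      · exact (continuous_const.mul (gg_cont n)).intervalIntegrable 0 x
    rw [gg_zero (n+1) (by omega), sub_zero] at hftc
    rw [← hftc]
    calc ‖∫ s in (0:ℝ)..x, Complex.I * gg n s‖
        ≤ ∫ s in (0:ℝ)..x, ‖Complex.I * gg n s‖ :=
          intervalIntegral.norm_integral_le_integral_norm hx
      _ ≤ ∫ s in (0:ℝ)..x, s ^ n / n.factorial := by
          apply intervalIntegral.integral_mono_on hx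
          · exact ((continuous_const.mul (gg_cont n)).norm).intervalIntegrable 0 x
          · exact ((continuous_pow n).div_const _).intervalIntegrable 0 x
          · intro s hs
            rw [norm_mul, Complex.norm_I, one_mul]
            exact ih s hs.1
      _ = x ^ (n+1) / (n+1).factorial := by
          rw [intervalIntegral.integral_div, integral_pow]
          rw [Nat.factorial_succ]
          push_cast
          field_simp
          simp

noncomputable def hh (n : ℕ) (l : ℝ) (x : ℝ) : ℂ :=
  gg n x - (l : ℂ) * (Complex.I * x) ^ n / (n.factorial : ℂ)

lemma gg_neg (n : ℕ) (x : ℝ) : gg n (-x) = starRingEnd ℂ (gg n x) := by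
  unfold gg
  rw [map_sub, map_sum, ← Complex.exp_conj]
  congr 1
  · congr 1
    simp [Complex.ext_iff]
  · apply Finset.sum_congr rfl
    intro k _
    rw [map_div₀, map_pow, map_natCast, map_mul, Complex.conj_I, Complex.conj_ofReal]
    congr 2
    push_cast
    ring

lemma hh_neg (n : ℕ) (l : ℝ) (x : ℝ) : hh n l (-x) = starRingEnd ℂ (hh n l x) := by
  unfold hh
  rw [map_sub, ← gg_neg, map_div₀, map_mul, map_pow, map_mul, Complex.conj_I,
    Complex.conj_ofReal, Complex.conj_ofReal, map_natCast]
  congr 3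
  push_cast
  ring

lemma gg_bound (n : ℕ) (x : ℝ) : ‖gg n x‖ ≤ |x| ^ n / n.factorial := by
  rcases le_or_gt 0 x with hx | hx
  · rw [_root_.abs_of_nonneg hx]; exact gg_bound_nonneg n x hx
  · have := gg_bound_nonneg n (-x) (by linarith)
    rw [gg_neg, RCLike.norm_conj] at this
    rwa [_root_.abs_of_neg hx]

lemma norm_hh_le (n : ℕ) (l : ℝ) (hl : 0 ≤ l) (x : ℝ) :
    ‖hh n l x‖ ≤ (1 + l) * |x| ^ n / n.factorial := by
  unfold hh
  calc ‖gg n x - (l : ℂ) * (Complex.I * x) ^ n / (n.factorial : ℂ)‖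
      ≤ ‖gg n x‖ + ‖(l : ℂ) * (Complex.I * x) ^ n / (n.factorial : ℂ)‖ := norm_sub_le _ _
    _ ≤ |x| ^ n / n.factorial + l * |x| ^ n / n.factorial := by
        gcongr
        · exact gg_bound n x
        · rw [norm_div, norm_mul, norm_pow, norm_mul]
          simp only [Complex.norm_I, Complex.norm_real, Real.norm_eq_abs,
            Complex.norm_natCast, one_mul]
          rw [_root_.abs_of_nonneg hl]
    _ = (1 + l) * |x| ^ n / n.factorial := by ring

lemma hh_le_sSup (n : ℕ) (hn : 1 ≤ n) (l : ℝ) (hl : 0 ≤ l) (x : ℝ) :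
    ‖hh n l x‖ ≤
      sSup {y : ℝ | ∃ x : ℝ, 0 < x ∧ y = (n.factorial : ℝ) / x ^ n * ‖hh n l x‖}
        * |x| ^ n / n.factorial := by
  set S := {y : ℝ | ∃ x : ℝ, 0 < x ∧ y = (n.factorial : ℝ) / x ^ n * ‖hh n l x‖} with hS
  have hfac : (0 : ℝ) < n.factorial := by exact_mod_cast n.factorial_pos
  have hbdd : BddAbove S := by
    refine ⟨1 + l, ?_⟩
    rintro y ⟨z, hz, rfl⟩
    have hzn : (0 : ℝ) < z ^ n := pow_pos hz n
    calc (n.factorial : ℝ) / z ^ n * ‖hh n l z‖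
        ≤ (n.factorial : ℝ) / z ^ n * ((1 + l) * |z| ^ n / n.factorial) :=
          mul_le_mul_of_nonneg_left (norm_hh_le n l hl z) (by positivity)
      _ = 1 + l := by
          rw [_root_.abs_of_pos hz]
          field_simp
  have main_pos : ∀ z : ℝ, 0 < z → ‖hh n l z‖ ≤ sSup S * |z| ^ n / n.factorial := by
    intro z hz
    have hmem : (n.factorial : ℝ) / z ^ n * ‖hh n l z‖ ∈ S := ⟨z, hz, rfl⟩
    have hle := le_csSup hbdd hmem
    have hzn : (0 : ℝ) < z ^ n := pow_pos hz n
    rw [_root_.abs_of_pos hz]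
    rw [div_mul_eq_mul_div] at hle
    have h2 : (n.factorial : ℝ) * ‖hh n l z‖ ≤ sSup S * z ^ n := (div_le_iff₀ hzn).mp hle
    rw [le_div_iff₀ hfac]
    linarith
  rcases lt_trichotomy x 0 with hx | hx | hx
  · have := main_pos (-x) (by linarith)
    rw [hh_neg, RCLike.norm_conj, abs_neg] at this
    exact this
  · subst hx
    have h0 : hh n l 0 = 0 := by
      unfold hh
      rw [gg_zero n hn]
      simp [zero_pow (by omega : n ≠ 0)]
    rw [h0]
    simp [zero_pow (by omega : n ≠ 0), abs_zero]
  · exact main_pos x hx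

lemma creal_integral {Ω : Type*} [MeasurableSpace Ω] (μ : Measure Ω) (f : Ω → ℝ) :
    ∫ ω, ((f ω : ℝ) : ℂ) ∂μ = ((∫ ω, f ω ∂μ : ℝ) : ℂ) :=
  integral_ofReal

theorem chf_taylor_expansion_bound
    {Ω : Type*} [MeasurableSpace Ω] (μ : Measure Ω) [IsProbabilityMeasure μ]
    (X : Ω → ℝ) (hX : Measurable X) (n : ℕ) (hn : 1 ≤ n)
    (hint : Integrable (fun ω => |X ω| ^ n) μ) (t l : ℝ) (hl : 0 ≤ l) :
    ‖(∫ ω, Complex.exp (Complex.I * t * X ω) ∂μ) -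
      ∑ k ∈ Finset.range n, ((∫ ω, X ω ^ k ∂μ : ℝ) : ℂ) * (Complex.I * t) ^ k / (k.factorial : ℂ) -
      (l : ℂ) * ((∫ ω, X ω ^ n ∂μ : ℝ) : ℂ) * (Complex.I * t) ^ n / (n.factorial : ℂ)‖ ≤
      (sSup {y : ℝ | ∃ x : ℝ, 0 < x ∧
        y = (n.factorial : ℝ) / x ^ n *
          ‖Complex.exp (Complex.I * x) -
            ∑ k ∈ Finset.range n, (Complex.I * x) ^ k / (k.factorial : ℂ) -
            (l : ℂ) * (Complex.I * x) ^ n / (n.factorial : ℂ)‖}) *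
        (∫ ω, |X ω| ^ n ∂μ) * |t| ^ n / (n.factorial : ℝ) := by
  -- identify the set with hh
  have hSet : {y : ℝ | ∃ x : ℝ, 0 < x ∧
        y = (n.factorial : ℝ) / x ^ n *
          ‖Complex.exp (Complex.I * x) -
            ∑ k ∈ Finset.range n, (Complex.I * x) ^ k / (k.factorial : ℂ) -
            (l : ℂ) * (Complex.I * x) ^ n / (n.factorial : ℂ)‖}
      = {y : ℝ | ∃ x : ℝ, 0 < x ∧ y = (n.factorial : ℝ) / x ^ n * ‖hh n l x‖} := by
    rfl
  rw [hSet]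
  set q := sSup {y : ℝ | ∃ x : ℝ, 0 < x ∧ y = (n.factorial : ℝ) / x ^ n * ‖hh n l x‖} with hq
  -- integrability of moments
  have hmom : ∀ k, k ≤ n → Integrable (fun ω => X ω ^ k) μ := by
    intro k hk
    refine ((integrable_const (1:ℝ)).add hint).mono'
      ((hX.pow_const k).aestronglyMeasurable) (ae_of_all _ fun ω => ?_)
    simp only [Pi.add_apply, Real.norm_eq_abs]
    rw [_root_.abs_pow]
    rcases le_or_gt (|X ω|) 1 with h | h
    · have h1 : |X ω| ^ k ≤ 1 := pow_le_one₀ (abs_nonneg _) h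
      have h2 : (0:ℝ) ≤ |X ω| ^ n := by positivity
      linarith
    · have h1 : |X ω| ^ k ≤ |X ω| ^ n := pow_le_pow_right₀ h.le hk
      linarith
  have hmomC : ∀ k, k ≤ n → Integrable (fun ω => ((X ω ^ k : ℝ) : ℂ)) μ := fun k hk =>
    (hmom k hk).ofReal
  have hexpI : Integrable (fun ω => Complex.exp (Complex.I * t * X ω)) μ := by
    refine (integrable_const (1:ℝ)).mono'
      ((Complex.measurable_exp.comp
        ((measurable_const.mul (Complex.measurable_ofReal.comp hX)))).aestronglyMeasurable)
      (ae_of_all _ fun ω => ?_)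
    rw [Complex.norm_exp]
    simp
  -- pointwise form of hh ∘ (t * X)
  have hptw : ∀ ω, hh n l (t * X ω) =
      Complex.exp (Complex.I * t * X ω) -
      ∑ k ∈ Finset.range n, ((X ω ^ k : ℝ) : ℂ) * ((Complex.I * t) ^ k / (k.factorial : ℂ)) -
      (l : ℂ) * (((X ω ^ n : ℝ) : ℂ) * ((Complex.I * t) ^ n / (n.factorial : ℂ))) := by
    intro ω
    unfold hh gg
    push_cast
    congr 1
    congr 1
    · ring_nf
    · apply Finset.sum_congr rfl
      intro k _
      ring
    · ring
  have hintsum : Integrable (fun ω => ∑ k ∈ Finset.range n,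
      ((X ω ^ k : ℝ) : ℂ) * ((Complex.I * t) ^ k / (k.factorial : ℂ))) μ := by
    apply integrable_finset_sum
    intro k hk
    exact (hmomC k (Finset.mem_range.mp hk).le).mul_const _
  have hintl : Integrable (fun ω => (l : ℂ) *
      (((X ω ^ n : ℝ) : ℂ) * ((Complex.I * t) ^ n / (n.factorial : ℂ)))) μ :=
    ((hmomC n le_rfl).mul_const _).const_mul _
  have hinthh : Integrable (fun ω => hh n l (t * X ω)) μ := by
    rw [show (fun ω => hh n l (t * X ω)) = _ from funext hptw]
    exact (hexpI.sub hintsum).sub hintl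
  -- the integral identity
  have hid : ∫ ω, hh n l (t * X ω) ∂μ =
      (∫ ω, Complex.exp (Complex.I * t * X ω) ∂μ) -
      ∑ k ∈ Finset.range n, ((∫ ω, X ω ^ k ∂μ : ℝ) : ℂ) * (Complex.I * t) ^ k / (k.factorial : ℂ) -
      (l : ℂ) * ((∫ ω, X ω ^ n ∂μ : ℝ) : ℂ) * (Complex.I * t) ^ n / (n.factorial : ℂ) := by
    rw [show (fun ω => hh n l (t * X ω)) = _ from funext hptw]
    have hsub : Integrable (fun ω => Complex.exp (Complex.I * t * X ω) -
        ∑ k ∈ Finset.range n, ((X ω ^ k : ℝ) : ℂ) * ((Complex.I * t) ^ k / (k.factorial : ℂ))) μ :=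
      hexpI.sub hintsum
    rw [integral_sub hsub hintl, integral_sub hexpI hintsum,
      integral_finset_sum _ (fun k hk => (hmomC k (Finset.mem_range.mp hk).le).mul_const _),
      integral_const_mul]
    congr 1
    · congr 1
      apply Finset.sum_congr rfl
      intro k _
      rw [integral_mul_const, creal_integral]
      ring
    · rw [integral_mul_const, creal_integral]
      ring
  rw [← hid]
  -- the final estimate
  calc ‖∫ ω, hh n l (t * X ω) ∂μ‖ ≤ ∫ ω, ‖hh n l (t * X ω)‖ ∂μ :=
        norm_integral_le_integral_norm _
    _ ≤ ∫ ω, (q * |t| ^ n / n.factorial) * |X ω| ^ n ∂μ := by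
        apply integral_mono_of_nonneg (ae_of_all _ fun ω => norm_nonneg _)
          (hint.const_mul _) (ae_of_all _ fun ω => ?_)
        have h := hh_le_sSup n hn l hl (t * X ω)
        rw [← hq] at h
        calc ‖hh n l (t * X ω)‖ ≤ q * |t * X ω| ^ n / n.factorial := h
          _ = (q * |t| ^ n / n.factorial) * |X ω| ^ n := by
              rw [_root_.abs_mul, mul_pow]; ring
    _ = q * (∫ ω, |X ω| ^ n ∂μ) * |t| ^ n / (n.factorial : ℝ) := by
        rw [integral_const_mul]
        ring
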